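/- Let G be a ℚ-group (every element has a unique k-th root for every k ≥ 1), let F be a free group on m generators x_1,…,x_m, and let w ∈ F with w ∉ [F,F]. Then the word map w : G^m → G, obtained by substituting group elements for the generators, is surjective. -/
import Mathlib

theorem word_map_surjective_on_Q_group
    {G : Type*} [Group G]
    (hQ : ∀ g : G, ∀ k : ℕ, 1 ≤ k → ∃! h : G, h ^ k = g)
    (m : ℕ) (w : FreeGroup (Fin m))
    (hw : w ∉ commutator (FreeGroup (Fin m))) :
    ∀ g : G, ∃ v : Fin m → G, FreeGroup.lift v w = g := by
  intro g
  -- exponent-sum homomorphisms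
  set ψ : Fin m → (FreeGroup (Fin m) →* Multiplicative ℤ) :=
    fun k => FreeGroup.lift (fun j => if j = k then Multiplicative.ofAdd (1 : ℤ) else 1) with hψ
  have hψof : ∀ k j, ψ k (FreeGroup.of j) =
      (if j = k then Multiplicative.ofAdd (1 : ℤ) else 1) := by
    intro k j; simp [hψ]
  -- some exponent sum is nonzero
  have hker : ∃ k, ψ k w ≠ 1 := by
    by_contra h
    push_neg at h
    apply hw
    have key : (Abelianization.of : FreeGroup (Fin m) →* Abelianization (FreeGroup (Fin m))) =
        ∏ k : Fin m,
          (zpowersHom _ (Abelianization.of (FreeGroup.of k))).comp (ψ k) := by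
      apply FreeGroup.ext_hom
      intro j
      rw [MonoidHom.finset_prod_apply]
      rw [Finset.prod_eq_single j]
      · simp [hψof]
      · intro b _ hb
        simp [hψof, Ne.symm hb]
      · simp
    have h1 : Abelianization.of w = 1 := by
      rw [key, MonoidHom.finset_prod_apply]
      apply Finset.prod_eq_one
      intro k _
      simp [h k]
    exact (QuotientGroup.eq_one_iff w).mp h1
  obtain ⟨k, hk⟩ := hker
  set e : ℤ := Multiplicative.toAdd (ψ k w) with he
  have he0 : e ≠ 0 := fun h0 => hk (by
    rw [he] at h0
    exact toAdd_eq_zero.mp h0)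
  -- find h with h ^ e = g (zpow)
  have hroot : ∃ h : G, h ^ e = g := by
    rcases lt_or_gt_of_ne he0 with hneg | hpos
    · obtain ⟨h, hh, -⟩ := hQ g⁻¹ (-e).toNat (by omega)
      refine ⟨h, ?_⟩
      have : h ^ ((-e).toNat : ℤ) = g⁻¹ := by rw [zpow_natCast, hh]
      rw [Int.toNat_of_nonneg (by omega)] at this
      rw [← neg_neg e, zpow_neg, this, inv_inv]
    · obtain ⟨h, hh, -⟩ := hQ g e.toNat (by omega)
      refine ⟨h, ?_⟩
      have : h ^ ((e.toNat : ℤ)) = g := by rw [zpow_natCast, hh]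
      rwa [Int.toNat_of_nonneg (by omega)] at this
  obtain ⟨h, hh⟩ := hroot
  refine ⟨fun j => if j = k then h else 1, ?_⟩
  have hcomp : FreeGroup.lift (fun j => if j = k then h else 1) =
      (zpowersHom G h).comp (ψ k) := by
    apply FreeGroup.ext_hom
    intro j
    simp only [FreeGroup.lift_apply_of, MonoidHom.comp_apply, hψof, zpowersHom_apply]
    by_cases hj : j = k <;> simp [hj]
  rw [hcomp]
  simpa using hh
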